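/- Fix 0 < q < 1. On ℓ²(ℕ × ℕ) define operators t, a, b as in the representation σ: t|m,n⟩ = q^{2m+4n+4}|m,n⟩, a|m,n⟩ = (1-q^{2m})^{1/2} q^{m+2n}|m-1,n⟩, b|m,n⟩ = (1-q^{4n+4})^{1/2} q^{2(m+n+2)}|m,n+1⟩. Then the sphere relation a a* + b b* = q^{-2} t (1 - q^{-2} t) holds, where a*, b* are the Hilbert space adjoints. -/

import Mathlib

noncomputable section

/-- The Hilbert space ℓ²(ℕ × ℕ). -/
abbrev H2 : Type := lp (fun _ : ℕ × ℕ => ℂ) 2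

/-- The standard orthonormal basis vector `|m,n⟩` of ℓ²(ℕ × ℕ). -/
def ket (m n : ℕ) : H2 := lp.single 2 (m, n) (1 : ℂ)

open scoped InnerProductSpace

lemma ket_inner (m n : ℕ) (x : H2) : ⟪ket m n, x⟫_ℂ = x (m, n) := by
  rw [ket, lp.inner_single_left]
  simp [RCLike.inner_apply]

/-- Inner product of two kets. -/
lemma ket_inner_ket (m n m' n' : ℕ) :
    ⟪ket m n, ket m' n'⟫_ℂ = if (m', n') = (m, n) then 1 else 0 := by
  rw [ket_inner, ket, lp.single_apply]
  by_cases h : ((m : ℕ), n) = (m', n')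
  · rw [Pi.single_apply, if_pos h, if_pos h.symm]
  · rw [Pi.single_apply, if_neg h, if_neg (Ne.symm h)]

/-- Two vectors of `H2` agreeing against all kets are equal. -/
lemma H2_ext {x y : H2} (h : ∀ m n : ℕ, ⟪ket m n, x⟫_ℂ = ⟪ket m n, y⟫_ℂ) : x = y := by
  apply lp.ext
  funext p
  have := h p.1 p.2
  rwa [ket_inner, ket_inner] at this

/-- Two continuous linear maps agreeing on all kets are equal. -/
lemma clm_ext_ket {f g : H2 →L[ℂ] H2} (h : ∀ m n : ℕ, f (ket m n) = g (ket m n)) :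
    f = g := by
  classical
  set b : HilbertBasis (ℕ × ℕ) ℂ H2 := default with hbdef
  have hb : ∀ i : ℕ × ℕ, b i = ket i.1 i.2 := by
    intro i
    rw [← b.repr_symm_single]
    rfl
  have hd : Dense (Submodule.span ℂ (Set.range b) : Set H2) :=
    Submodule.dense_iff_topologicalClosure_eq_top.mpr b.dense_span
  refine ContinuousLinearMap.ext_on hd ?_
  rintro x ⟨i, rfl⟩
  rw [hb i]
  exact h i.1 i.2

open ContinuousLinearMap in
/-- In the representation σ of `A(S⁴_q)`: the sphere relation
`a a* + b b* = q⁻² t (1 - q⁻² t)` holds. -/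
theorem stmt4 (q : ℝ) (hq0 : 0 < q) (hq1 : q < 1)
    (t a b : H2 →L[ℂ] H2)
    (hT : ∀ m n : ℕ, t (ket m n) = ((q ^ (2 * m + 4 * n + 4) : ℝ) : ℂ) • ket m n)
    (ha0 : ∀ n : ℕ, a (ket 0 n) = 0)
    (ha : ∀ m n : ℕ, a (ket (m + 1) n)
        = ((Real.sqrt (1 - q ^ (2 * (m + 1))) * q ^ ((m + 1) + 2 * n) : ℝ) : ℂ) • ket m n)
    (hb : ∀ m n : ℕ, b (ket m n)
        = ((Real.sqrt (1 - q ^ (4 * n + 4)) * q ^ (2 * (m + n + 2)) : ℝ) : ℂ) • ket m (n + 1)) :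
    a * adjoint a + b * adjoint b
      = ((q : ℂ) ^ (-2 : ℤ)) • (t * (1 - ((q : ℂ) ^ (-2 : ℤ)) • t)) := by
  have hqne : (q : ℂ) ≠ 0 := by exact_mod_cast hq0.ne'
  have hpow_le_one : ∀ k : ℕ, q ^ k ≤ 1 := fun k => pow_le_one₀ hq0.le hq1.le
  have hsq : ∀ k : ℕ, Real.sqrt (1 - q ^ k) * Real.sqrt (1 - q ^ k) = 1 - q ^ k :=
    fun k => Real.mul_self_sqrt (by linarith [hpow_le_one k])
  -- adjoint of a on kets
  have hA : ∀ m n : ℕ, adjoint a (ket m n)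
      = ((Real.sqrt (1 - q ^ (2 * (m + 1))) * q ^ ((m + 1) + 2 * n) : ℝ) : ℂ)
          • ket (m + 1) n := by
    intro m n
    apply H2_ext
    intro m' n'
    rw [adjoint_inner_right, inner_smul_right, ket_inner_ket]
    cases m' with
    | zero =>
        rw [ha0, inner_zero_left]
        have : ((m + 1 : ℕ), n) ≠ (0, n') := by simp
        simp [this]
    | succ k =>
        rw [ha, inner_smul_left, ket_inner_ket]
        by_cases h : ((m + 1 : ℕ), n) = (k + 1, n')
        · have hk : k = m := by
            have := congrArg Prod.fst h; simpa using this.symm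
          have hn : n' = n := by
            have := congrArg Prod.snd h; simpa using this.symm
          subst hk; subst hn
          simp [Complex.conj_ofReal]
        · have h' : ((m : ℕ), n) ≠ (k, n') := by
            intro hc
            exact h (by
              have h1 := congrArg Prod.fst hc
              have h2 := congrArg Prod.snd hc
              simp at h1 h2
              simp [h1, h2])
          simp [h, h']
  -- adjoint of b on kets
  have hB0 : ∀ m : ℕ, adjoint b (ket m 0) = 0 := by
    intro m
    apply H2_ext
    intro m' n'
    rw [adjoint_inner_right, hb, inner_smul_left, ket_inner_ket, inner_zero_right]
    have : ((m : ℕ), 0) ≠ (m', n' + 1) := by simp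
    simp [this]
  have hB : ∀ m n : ℕ, adjoint b (ket m (n + 1))
      = ((Real.sqrt (1 - q ^ (4 * n + 4)) * q ^ (2 * (m + n + 2)) : ℝ) : ℂ) • ket m n := by
    intro m n
    apply H2_ext
    intro m' n'
    rw [adjoint_inner_right, hb, inner_smul_left, ket_inner_ket, inner_smul_right,
      ket_inner_ket]
    by_cases h : ((m : ℕ), n + 1) = (m', n' + 1)
    · have hm : m' = m := by
        have := congrArg Prod.fst h; simpa using this.symm
      have hn : n' = n := by
        have := congrArg Prod.snd h; simpa using this.symm
      subst hm; subst hn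
      simp [Complex.conj_ofReal]
    · have h' : ((m : ℕ), n) ≠ (m', n') := by
        intro hc
        exact h (by
          have h1 := congrArg Prod.fst hc
          have h2 := congrArg Prod.snd hc
          simp at h1 h2
          simp [h1, h2])
      simp [h, h']
  -- now prove equality on kets
  apply clm_ext_ket
  intro m n
  have hzp : ((q : ℂ) ^ (-2 : ℤ)) = ((q : ℂ) ^ 2)⁻¹ := by
    rw [zpow_neg]
    norm_cast
  -- RHS value
  have hRHS : (((q : ℂ) ^ (-2 : ℤ)) • (t * (1 - ((q : ℂ) ^ (-2 : ℤ)) • t))) (ket m n)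
      = (((q : ℝ) ^ (2 * m + 4 * n + 2) - (q : ℝ) ^ (4 * m + 8 * n + 4) : ℝ) : ℂ)
          • ket m n := by
    simp only [ContinuousLinearMap.smul_apply, ContinuousLinearMap.mul_apply,
      ContinuousLinearMap.sub_apply, ContinuousLinearMap.one_apply, hT, map_smul, map_sub,
      smul_smul, smul_sub]
    rw [← sub_smul]
    congr 1
    rw [hzp]
    push_cast
    have h2 : (q : ℂ) ^ 2 ≠ 0 := pow_ne_zero 2 hqne
    field_simp
    ring
  -- LHS: a a* part
  have hL1 : (a * adjoint a) (ket m n)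
      = (((1 - q ^ (2 * m + 2)) * q ^ (2 * m + 4 * n + 2) : ℝ) : ℂ) • ket m n := by
    rw [ContinuousLinearMap.mul_apply, hA, map_smul, ha, smul_smul]
    congr 1
    norm_cast
    linear_combination (q ^ ((m + 1) + 2 * n) * q ^ ((m + 1) + 2 * n)) * hsq (2 * (m + 1))
  -- LHS: b b* part
  have hL2 : (b * adjoint b) (ket m n)
      = (((1 - q ^ (4 * n)) * q ^ (4 * m + 4 * n + 4) : ℝ) : ℂ) • ket m n := by
    cases n with
    | zero =>
        rw [ContinuousLinearMap.mul_apply, hB0, map_zero]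
        simp
    | succ k =>
        rw [ContinuousLinearMap.mul_apply, hB, map_smul, hb, smul_smul]
        congr 1
        norm_cast
        linear_combination (q ^ (2 * (m + k + 2)) * q ^ (2 * (m + k + 2))) * hsq (4 * k + 4)
  rw [add_apply, hL1, hL2, hRHS, ← add_smul]
  congr 1
  rw [← Complex.ofReal_add]
  congr 1
  ring
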